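/- arXiv:1505.04516 — 2 statements merged into one kernel-verified Lean document; each statement's English description precedes it below -/
import Mathlib

section
/- Let (S, σ) be a finite measure space, E, B, ν : S → ℝ³ measurable with E, B square-integrable and ‖ν(x)‖ = 1 for σ-a.e. x, and let μ, μ_M, j_M : S → ℝ be integrable with μ_M = μ − (1/(8π))(‖E‖² + ‖B‖²) σ-a.e. and ∫_S (μ_M − j_M) dσ ≥ 0. Define Q² = (1/(4π) ∫_S ⟨E, ν⟩ dσ)² + (1/(4π) ∫_S ⟨B, ν⟩ dσ)². Then Q² ≤ (σ(S)/(2π)) ∫_S (μ − j_M) dσ. -/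
open MeasureTheory Real
open scoped RealInnerProductSpace

theorem sq_integral_le_aux {S : Type*} [MeasurableSpace S] (σ : Measure S) [IsFiniteMeasure σ]
    (f : S → ℝ) (hf : ∀ x, 0 ≤ f x) (hf2 : MemLp f 2 σ) :
    (∫ x, f x ∂σ) ^ 2 ≤ (σ Set.univ).toReal * ∫ x, f x ^ 2 ∂σ := by
  have hpq : Real.HolderConjugate 2 2 := by constructor <;> norm_num
  have h1 : MemLp (fun _ : S => (1 : ℝ)) (ENNReal.ofReal 2) σ := by
    simpa using (memLp_const (1 : ℝ) (μ := σ) (p := ENNReal.ofReal 2))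
  have hf2' : MemLp f (ENNReal.ofReal 2) σ := by
    simpa [ENNReal.ofReal_ofNat] using hf2
  have key := integral_mul_le_Lp_mul_Lq_of_nonneg hpq
    (Filter.Eventually.of_forall hf) (Filter.Eventually.of_forall (fun _ => zero_le_one)) hf2' h1
  simp only [Real.one_rpow, mul_one] at key
  have hIf2 : 0 ≤ ∫ x, f x ^ (2:ℝ) ∂σ := integral_nonneg fun x => Real.rpow_nonneg (hf x) 2
  have hσ : 0 ≤ (σ Set.univ).toReal := ENNReal.toReal_nonneg
  have hInt1 : ∫ x : S, (1:ℝ) ∂σ = (σ Set.univ).toReal := by simp [Measure.real]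
  rw [hInt1] at key
  have hIf : 0 ≤ ∫ x, f x ∂σ := integral_nonneg hf
  calc (∫ x, f x ∂σ) ^ 2 ≤ ((∫ x, f x ^ (2:ℝ) ∂σ) ^ (1/(2:ℝ)) * (σ Set.univ).toReal ^ (1/(2:ℝ))) ^ 2 := by
        apply pow_le_pow_left₀ hIf key
    _ = (∫ x, f x ^ (2:ℝ) ∂σ) * (σ Set.univ).toReal := by
        rw [mul_pow, ← Real.rpow_natCast ((∫ x, f x ^ (2:ℝ) ∂σ) ^ (1/(2:ℝ))) 2,
          ← Real.rpow_natCast ((σ Set.univ).toReal ^ (1/(2:ℝ))) 2,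
          ← Real.rpow_mul hIf2, ← Real.rpow_mul hσ]
        norm_num
    _ = (σ Set.univ).toReal * ∫ x, f x ^ 2 ∂σ := by
        rw [mul_comm]; congr 1; apply integral_congr_ae; filter_upwards with x
        rw [← Real.rpow_natCast (f x) 2]; norm_num

/-- Inequality (3) of the paper: the squared total charge of a body is bounded by
its boundary area times the integral of `μ - |J_M|` over the boundary. -/
theorem charge_sq_le_area_mul_matter_integral
    {S : Type*} [MeasurableSpace S] (σ : Measure S) [IsFiniteMeasure σ]
    (E B ν : S → EuclideanSpace ℝ (Fin 3))
    (hE : Measurable E) (hB : Measurable B) (hν : Measurable ν)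
    (hE2 : MemLp E 2 σ) (hB2 : MemLp B 2 σ)
    (hν1 : ∀ᵐ x ∂σ, ‖ν x‖ = 1)
    (μ μM jM : S → ℝ)
    (hμ : Integrable μ σ) (hμM : Integrable μM σ) (hjM : Integrable jM σ)
    (hconstraint : ∀ᵐ x ∂σ, μM x = μ x - (1 / (8 * π)) * (‖E x‖ ^ 2 + ‖B x‖ ^ 2))
    (hdec : 0 ≤ ∫ x, (μM x - jM x) ∂σ) :
    ((1 / (4 * π)) * ∫ x, ⟪E x, ν x⟫ ∂σ) ^ 2
      + ((1 / (4 * π)) * ∫ x, ⟪B x, ν x⟫ ∂σ) ^ 2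
    ≤ ((σ Set.univ).toReal / (2 * π)) * ∫ x, (μ x - jM x) ∂σ := by
  set s : ℝ := (σ Set.univ).toReal with hs
  have hσ : 0 ≤ s := ENNReal.toReal_nonneg
  -- integrability of squared norms
  have hEsq : Integrable (fun x => ‖E x‖ ^ 2) σ := by
    have := hE2.integrable_norm_rpow two_ne_zero ENNReal.ofNat_ne_top
    simp only [ENNReal.toReal_ofNat] at this
    convert this using 2 with x
    rw [← Real.rpow_natCast ‖E x‖ 2]; norm_num
  have hBsq : Integrable (fun x => ‖B x‖ ^ 2) σ := by
    have := hB2.integrable_norm_rpow two_ne_zero ENNReal.ofNat_ne_top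
    simp only [ENNReal.toReal_ofNat] at this
    convert this using 2 with x
    rw [← Real.rpow_natCast ‖B x‖ 2]; norm_num
  -- norms are integrable
  have hEn : Integrable (fun x => ‖E x‖) σ := (hE2.integrable one_le_two).norm
  have hBn : Integrable (fun x => ‖B x‖) σ := (hB2.integrable one_le_two).norm
  -- bound for inner integrals
  have inner_bound : ∀ (F : S → EuclideanSpace ℝ (Fin 3)), Measurable F →
      Integrable (fun x => ‖F x‖) σ →
      |∫ x, ⟪F x, ν x⟫ ∂σ| ≤ ∫ x, ‖F x‖ ∂σ := by
    intro F hF hFn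
    have hmeas : AEStronglyMeasurable (fun x => ⟪F x, ν x⟫) σ :=
      (hF.inner hν).aestronglyMeasurable
    have hbd : ∀ᵐ x ∂σ, ‖⟪F x, ν x⟫‖ ≤ ‖F x‖ := by
      filter_upwards [hν1] with x hx
      calc ‖⟪F x, ν x⟫‖ = |⟪F x, ν x⟫| := rfl
        _ ≤ ‖F x‖ * ‖ν x‖ := abs_real_inner_le_norm _ _
        _ = ‖F x‖ := by rw [hx, mul_one]
    have hint : Integrable (fun x => ⟪F x, ν x⟫) σ := hFn.mono' hmeas hbd
    have step1 : |∫ x, ⟪F x, ν x⟫ ∂σ| ≤ ∫ x, ‖⟪F x, ν x⟫‖ ∂σ := by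
      simpa [Real.norm_eq_abs] using norm_integral_le_integral_norm (μ := σ) fun x => ⟪F x, ν x⟫
    exact step1.trans (integral_mono_ae hint.norm hFn hbd)
  -- squared inner integral bounds
  have hEkey : (∫ x, ⟪E x, ν x⟫ ∂σ) ^ 2 ≤ s * ∫ x, ‖E x‖ ^ 2 ∂σ := by
    calc (∫ x, ⟪E x, ν x⟫ ∂σ) ^ 2 = |∫ x, ⟪E x, ν x⟫ ∂σ| ^ 2 := (sq_abs _).symm
      _ ≤ (∫ x, ‖E x‖ ∂σ) ^ 2 := pow_le_pow_left₀ (abs_nonneg _) (inner_bound E hE hEn) 2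
      _ ≤ s * ∫ x, ‖E x‖ ^ 2 ∂σ := sq_integral_le_aux σ _ (fun x => norm_nonneg _) hE2.norm
  have hBkey : (∫ x, ⟪B x, ν x⟫ ∂σ) ^ 2 ≤ s * ∫ x, ‖B x‖ ^ 2 ∂σ := by
    calc (∫ x, ⟪B x, ν x⟫ ∂σ) ^ 2 = |∫ x, ⟪B x, ν x⟫ ∂σ| ^ 2 := (sq_abs _).symm
      _ ≤ (∫ x, ‖B x‖ ∂σ) ^ 2 := pow_le_pow_left₀ (abs_nonneg _) (inner_bound B hB hBn) 2
      _ ≤ s * ∫ x, ‖B x‖ ^ 2 ∂σ := sq_integral_le_aux σ _ (fun x => norm_nonneg _) hB2.norm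
  -- rewrite RHS integral
  have hsplit : ∫ x, (μ x - jM x) ∂σ
      = (∫ x, (μM x - jM x) ∂σ) + (1 / (8 * π)) * ((∫ x, ‖E x‖ ^ 2 ∂σ) + ∫ x, ‖B x‖ ^ 2 ∂σ) := by
    have h1 : ∫ x, (μ x - jM x) ∂σ
        = ∫ x, ((μM x - jM x) + (1 / (8 * π)) * (‖E x‖ ^ 2 + ‖B x‖ ^ 2)) ∂σ := by
      apply integral_congr_ae
      filter_upwards [hconstraint] with x hx
      rw [hx]; ring
    have h2 := integral_add (μ := σ) (f := fun x => μM x - jM x)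
      (g := fun x => (1 / (8 * π)) * (‖E x‖ ^ 2 + ‖B x‖ ^ 2)) (hμM.sub hjM)
      ((hEsq.add hBsq).const_mul _)
    rw [h1, h2, integral_const_mul, integral_add hEsq hBsq]
  have hIE : 0 ≤ ∫ x, ‖E x‖ ^ 2 ∂σ := integral_nonneg fun x => by positivity
  have hIB : 0 ≤ ∫ x, ‖B x‖ ^ 2 ∂σ := integral_nonneg fun x => by positivity
  have hπ : 0 < π := Real.pi_pos
  set IE := ∫ x, ‖E x‖ ^ 2 ∂σ
  set IB := ∫ x, ‖B x‖ ^ 2 ∂σ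
  have hRHS : (s / (16 * π ^ 2)) * (IE + IB) ≤ (s / (2 * π)) * ∫ x, (μ x - jM x) ∂σ := by
    rw [hsplit]
    have : (s / (2 * π)) * ((∫ x, (μM x - jM x) ∂σ) + (1 / (8 * π)) * (IE + IB))
        = (s / (2 * π)) * (∫ x, (μM x - jM x) ∂σ) + (s / (16 * π ^ 2)) * (IE + IB) := by
      field_simp; ring
    rw [this]
    have : 0 ≤ (s / (2 * π)) * (∫ x, (μM x - jM x) ∂σ) :=
      mul_nonneg (div_nonneg hσ (by positivity)) hdec
    linarith
  refine le_trans ?_ hRHS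
  have hpos : (0:ℝ) < 16 * π ^ 2 := by positivity
  rw [show s / (16 * π ^ 2) * (IE + IB) = s * (IE + IB) / (16 * π ^ 2) from by ring,
    le_div_iff₀ hpos]
  have hc : ((1 / (4 * π)) ^ 2) * (16 * π ^ 2) = 1 := by field_simp; ring
  set A := ∫ x, ⟪E x, ν x⟫ ∂σ
  set C := ∫ x, ⟪B x, ν x⟫ ∂σ
  calc (((1 / (4 * π)) * A) ^ 2 + ((1 / (4 * π)) * C) ^ 2) * (16 * π ^ 2)
      = (A ^ 2 + C ^ 2) * (((1 / (4 * π)) ^ 2) * (16 * π ^ 2)) := by ring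
    _ = A ^ 2 + C ^ 2 := by rw [hc, mul_one]
    _ ≤ s * (IE + IB) := by have := add_le_add hEkey hBkey; linarith [this]
end

section
/- Let c, G, R be positive real constants and μ₀ ≥ 0 a real constant. Let (S, σ) be a finite measure space, E, B, ν : S → ℝ³ measurable with E, B square-integrable and ‖ν(x)‖ = 1 σ-a.e., and j_M : S → ℝ measurable with 0 ≤ j_M σ-a.e. Assume the constraint μ_M = μ₀ − (1/(8π))(‖E‖² + ‖B‖²) σ-a.e. together with the charged dominant energy condition μ_M ≥ j_M σ-a.e., and assume the Schoen–Yau density estimate μ₀ ≤ (π c⁴)/(6 G R²). Define Q² = (1/(4π) ∫_S ⟨E, ν⟩ dσ)² + (1/(4π) ∫_S ⟨B, ν⟩ dσ)². Then |Q| ≤ √(c⁴/(12G)) · σ(S)/R. -/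
open MeasureTheory Real
open scoped RealInnerProductSpace

lemma sq_integral_le_measure_mul_integral_sq {S : Type*} [MeasurableSpace S]
    (σ : Measure S) [IsFiniteMeasure σ] {f : S → ℝ} (hf : MemLp f 2 σ) :
    (∫ x, f x ∂σ) ^ 2 ≤ (σ Set.univ).toReal * ∫ x, f x ^ 2 ∂σ := by
  have hpq : (2:ℝ).HolderConjugate 2 := Real.holderConjugate_iff.mpr ⟨one_lt_two, by norm_num⟩
  have h2 : ENNReal.ofReal (2:ℝ) = 2 := by norm_num
  have habs : MemLp (fun x => |f x|) (ENNReal.ofReal (2:ℝ)) σ := by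
    rw [h2]; exact hf.abs
  have hone : MemLp (fun _ : S => (1:ℝ)) (ENNReal.ofReal (2:ℝ)) σ := by
    rw [h2]; exact memLp_const 1
  have h := integral_mul_le_Lp_mul_Lq_of_nonneg hpq
    (Filter.Eventually.of_forall fun x => abs_nonneg _)
    (Filter.Eventually.of_forall fun _ => zero_le_one) habs hone
  simp only [mul_one, Real.one_rpow, integral_const, smul_eq_mul] at h
  have hr1 : ∀ x, |f x| ^ (2:ℝ) = f x ^ 2 := by
    intro x
    rw [show (2:ℝ) = ((2:ℕ):ℝ) by norm_num, Real.rpow_natCast, sq_abs]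
  simp only [hr1] at h
  -- h : ∫ |f x| ≤ (∫ f x ^ 2) ^ (1/2 : ℝ) * ((σ univ).toReal) ^ (1/2 : ℝ)
  have hA : 0 ≤ ∫ x, f x ^ 2 ∂σ := integral_nonneg fun x => sq_nonneg _
  have hm : (0:ℝ) ≤ (σ Set.univ).toReal := ENNReal.toReal_nonneg
  have hsqrt : (∫ x, f x ^ 2 ∂σ) ^ ((1:ℝ)/2) * ((σ Set.univ).toReal) ^ ((1:ℝ)/2)
      = Real.sqrt ((∫ x, f x ^ 2 ∂σ) * (σ Set.univ).toReal) := by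
    rw [Real.sqrt_mul hA, Real.sqrt_eq_rpow, Real.sqrt_eq_rpow]
  rw [Measure.real, hsqrt] at h
  have habsint : |∫ x, f x ∂σ| ≤ ∫ x, |f x| ∂σ := by
    simpa using norm_integral_le_integral_norm (μ := σ) f
  have h3 : |∫ x, f x ∂σ| ≤ Real.sqrt ((∫ x, f x ^ 2 ∂σ) * (σ Set.univ).toReal) :=
    habsint.trans h
  have h4 : (∫ x, f x ∂σ) ^ 2 ≤ (∫ x, f x ^ 2 ∂σ) * (σ Set.univ).toReal := by
    have := Real.sq_sqrt (mul_nonneg hA hm)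
    nlinarith [abs_nonneg (∫ x, f x ∂σ), sq_abs (∫ x, f x ∂σ),
      Real.sqrt_nonneg ((∫ x, f x ^ 2 ∂σ) * (σ Set.univ).toReal)]
  linarith [h4]

/-- Theorem 1 of the paper (maximal data with constant energy density `μ₀`),
conditional on the Schoen–Yau density estimate `μ₀ ≤ π c⁴ / (6 G R²)`:
the total charge is bounded by `√(c⁴/(12 G)) · |∂Ω| / R`. -/
theorem charge_le_size_maximal
    (c G R : ℝ) (hc : 0 < c) (hG : 0 < G) (hR : 0 < R)
    (μ₀ : ℝ) (hμ₀ : 0 ≤ μ₀)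
    {S : Type*} [MeasurableSpace S] (σ : Measure S) [IsFiniteMeasure σ]
    (E B ν : S → EuclideanSpace ℝ (Fin 3))
    (hE : Measurable E) (hB : Measurable B) (hν : Measurable ν)
    (hE2 : MemLp E 2 σ) (hB2 : MemLp B 2 σ)
    (hν1 : ∀ᵐ x ∂σ, ‖ν x‖ = 1)
    (μM jM : S → ℝ) (hjMmeas : Measurable jM)
    (hjM0 : ∀ᵐ x ∂σ, 0 ≤ jM x)
    (hconstraint : ∀ᵐ x ∂σ, μM x = μ₀ - (1 / (8 * π)) * (‖E x‖ ^ 2 + ‖B x‖ ^ 2))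
    (hdec : ∀ᵐ x ∂σ, jM x ≤ μM x)
    (hSY : μ₀ ≤ π * c ^ 4 / (6 * G * R ^ 2)) :
    Real.sqrt (((1 / (4 * π)) * ∫ x, ⟪E x, ν x⟫ ∂σ) ^ 2
        + ((1 / (4 * π)) * ∫ x, ⟪B x, ν x⟫ ∂σ) ^ 2)
    ≤ Real.sqrt (c ^ 4 / (12 * G)) * ((σ Set.univ).toReal / R) := by
  have hπ : (0:ℝ) < π := Real.pi_pos
  set f : S → ℝ := fun x => ⟪E x, ν x⟫ with hf_def
  set g : S → ℝ := fun x => ⟪B x, ν x⟫ with hg_def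
  set σR : ℝ := (σ Set.univ).toReal with hσR_def
  have hσR0 : 0 ≤ σR := ENNReal.toReal_nonneg
  -- measurability of f and g
  have hfmeas : AEStronglyMeasurable f σ := (hE.inner hν).aestronglyMeasurable
  have hgmeas : AEStronglyMeasurable g σ := (hB.inner hν).aestronglyMeasurable
  -- pointwise bounds
  have hfE : ∀ᵐ x ∂σ, |f x| ≤ ‖E x‖ := by
    filter_upwards [hν1] with x hx
    calc |f x| ≤ ‖E x‖ * ‖ν x‖ := abs_real_inner_le_norm _ _
    _ = ‖E x‖ := by rw [hx, mul_one]
  have hgB : ∀ᵐ x ∂σ, |g x| ≤ ‖B x‖ := by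
    filter_upwards [hν1] with x hx
    calc |g x| ≤ ‖B x‖ * ‖ν x‖ := abs_real_inner_le_norm _ _
    _ = ‖B x‖ := by rw [hx, mul_one]
  have hf2 : MemLp f 2 σ := hE2.of_le hfmeas (by
    filter_upwards [hfE] with x hx; simpa using hx)
  have hg2 : MemLp g 2 σ := hB2.of_le hgmeas (by
    filter_upwards [hgB] with x hx; simpa using hx)
  -- energy bound pointwise
  have hEB : ∀ᵐ x ∂σ, f x ^ 2 + g x ^ 2 ≤ 8 * π * μ₀ := by
    filter_upwards [hjM0, hconstraint, hdec, hfE, hgB] with x h0 hcon hde hfx hgx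
    have h1 : ‖E x‖ ^ 2 + ‖B x‖ ^ 2 ≤ 8 * π * μ₀ := by
      have h2 : 0 ≤ μ₀ - (1 / (8 * π)) * (‖E x‖ ^ 2 + ‖B x‖ ^ 2) := by
        rw [← hcon]; linarith
      have h3 : (1 / (8 * π)) * (‖E x‖ ^ 2 + ‖B x‖ ^ 2) ≤ μ₀ := by linarith
      calc ‖E x‖ ^ 2 + ‖B x‖ ^ 2
          = (8 * π) * ((1 / (8 * π)) * (‖E x‖ ^ 2 + ‖B x‖ ^ 2)) := by
            field_simp
        _ ≤ (8 * π) * μ₀ := by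
            apply mul_le_mul_of_nonneg_left h3; positivity
    have h4 : f x ^ 2 ≤ ‖E x‖ ^ 2 := by nlinarith [abs_nonneg (f x), norm_nonneg (E x), sq_abs (f x)]
    have h5 : g x ^ 2 ≤ ‖B x‖ ^ 2 := by nlinarith [abs_nonneg (g x), norm_nonneg (B x), sq_abs (g x)]
    linarith
  -- integral energy bound
  have hfint : Integrable (fun x => f x ^ 2) σ := hf2.integrable_sq
  have hgint : Integrable (fun x => g x ^ 2) σ := hg2.integrable_sq
  have hsum : (∫ x, f x ^ 2 ∂σ) + (∫ x, g x ^ 2 ∂σ) ≤ 8 * π * μ₀ * σR := by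
    rw [← integral_add hfint hgint]
    calc (∫ x, f x ^ 2 + g x ^ 2 ∂σ) ≤ ∫ _, 8 * π * μ₀ ∂σ :=
          integral_mono_ae (hfint.add hgint) (integrable_const _) hEB
      _ = 8 * π * μ₀ * σR := by rw [integral_const, smul_eq_mul, mul_comm]; rfl
  -- Cauchy–Schwarz on each integral
  have hCSf := sq_integral_le_measure_mul_integral_sq σ hf2
  have hCSg := sq_integral_le_measure_mul_integral_sq σ hg2
  have hkey : (∫ x, f x ∂σ) ^ 2 + (∫ x, g x ∂σ) ^ 2 ≤ 8 * π * μ₀ * σR ^ 2 := by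
    have hA : 0 ≤ ∫ x, f x ^ 2 ∂σ := integral_nonneg fun x => sq_nonneg _
    have hBB : 0 ≤ ∫ x, g x ^ 2 ∂σ := integral_nonneg fun x => sq_nonneg _
    nlinarith [hCSf, hCSg, hsum, hσR0]
  -- combine with the density estimate
  have hinner : ((1 / (4 * π)) * ∫ x, f x ∂σ) ^ 2 + ((1 / (4 * π)) * ∫ x, g x ∂σ) ^ 2
      ≤ c ^ 4 / (12 * G) * (σR / R) ^ 2 := by
    have hμσ : μ₀ * σR ^ 2 ≤ π * c ^ 4 / (6 * G * R ^ 2) * σR ^ 2 :=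
      mul_le_mul_of_nonneg_right hSY (sq_nonneg _)
    have hπ2 : (0:ℝ) < π ^ 2 := by positivity
    have h1 : ((1 / (4 * π)) * ∫ x, f x ∂σ) ^ 2 + ((1 / (4 * π)) * ∫ x, g x ∂σ) ^ 2
        = (1 / (16 * π ^ 2)) * ((∫ x, f x ∂σ) ^ 2 + (∫ x, g x ∂σ) ^ 2) := by ring
    rw [h1]
    have h2 : (1 / (16 * π ^ 2)) * ((∫ x, f x ∂σ) ^ 2 + (∫ x, g x ∂σ) ^ 2)
        ≤ (1 / (16 * π ^ 2)) * (8 * π * μ₀ * σR ^ 2) := by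
      apply mul_le_mul_of_nonneg_left hkey; positivity
    refine h2.trans ?_
    have h3 : (1 / (16 * π ^ 2)) * (8 * π * μ₀ * σR ^ 2) = μ₀ * σR ^ 2 / (2 * π) := by
      field_simp; ring
    rw [h3]
    have h4 : π * c ^ 4 / (6 * G * R ^ 2) * σR ^ 2 / (2 * π)
        = c ^ 4 / (12 * G) * (σR / R) ^ 2 := by
      field_simp; ring
    calc μ₀ * σR ^ 2 / (2 * π) ≤ π * c ^ 4 / (6 * G * R ^ 2) * σR ^ 2 / (2 * π) := by
          apply div_le_div_of_nonneg_right hμσ; positivity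
      _ = c ^ 4 / (12 * G) * (σR / R) ^ 2 := h4
  calc Real.sqrt (((1 / (4 * π)) * ∫ x, f x ∂σ) ^ 2 + ((1 / (4 * π)) * ∫ x, g x ∂σ) ^ 2)
      ≤ Real.sqrt (c ^ 4 / (12 * G) * (σR / R) ^ 2) := Real.sqrt_le_sqrt hinner
    _ = Real.sqrt (c ^ 4 / (12 * G)) * (σR / R) := by
        rw [Real.sqrt_mul (by positivity), Real.sqrt_sq (by positivity)]
end
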